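/- arXiv:2510.20742 — 4 statements merged into one kernel-verified Lean document; each statement's English description precedes it below -/
import Mathlib

section
/- Let Q be a probability distribution on a finite set X with Q(x) > 0 for all x, and let A be a d×k real matrix and α a vector in R^d such that the affine constraint set E = {P in the open probability simplex : AP = α} is nonempty. Then the I-projection P* = argmin_{P ∈ E} D(P‖Q) (minimizing Kullback–Leibler divergence) exists, is unique, and satisfies P*(x) > 0 for all x. -/
open Real Finset Matrix

/-- Kullback–Leibler divergence on a finite set. -/
noncomputable def KL {k : ℕ} (P Q : Fin k → ℝ) : ℝ :=
  ∑ x, P x * Real.log (P x / Q x)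

/-- Gradient inequality for `u ↦ u * log u`. -/
lemma IP_grad_ineq (a b : ℝ) (ha : 0 < a) (hb : 0 < b) :
    b * Real.log b - a * Real.log a ≤ (Real.log b + 1) * (b - a) := by
  have h : Real.log (b / a) ≤ b / a - 1 := Real.log_le_sub_one_of_pos (div_pos hb ha)
  rw [Real.log_div hb.ne' ha.ne'] at h
  have h2 := mul_le_mul_of_nonneg_left h ha.le
  have h3 : a * (b / a - 1) = b - a := by field_simp
  nlinarith [h2, h3]

/-- KL equals a sum of separated log terms. -/
lemma IP_KL_eq {k : ℕ} (P Q : Fin k → ℝ) (hQ : ∀ x, Q x ≠ 0) :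
    KL P Q = ∑ x, (P x * Real.log (P x) - P x * Real.log (Q x)) := by
  unfold KL
  refine Finset.sum_congr rfl fun x _ => ?_
  by_cases h : P x = 0
  · simp [h]
  · rw [Real.log_div h (hQ x)]; ring

/-- Strict convexity step for the midpoint. -/
lemma IP_strict_mid (a b : ℝ) (ha : 0 ≤ a) (hb : 0 ≤ b) (hab : a ≠ b) :
    ((a + b) / 2) * Real.log ((a + b) / 2)
      < (a * Real.log a) / 2 + (b * Real.log b) / 2 := by
  have := Real.strictConvexOn_mul_log.2 (Set.mem_Ici.2 ha) (Set.mem_Ici.2 hb) hab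
    (by norm_num : (0:ℝ) < 1/2) (by norm_num : (0:ℝ) < 1/2) (by norm_num)
  simp only [smul_eq_mul] at this
  rw [show (a + b) / 2 = 1/2*a + 1/2*b by ring]; linarith

/-- Convexity (non-strict) step for the midpoint. -/
lemma IP_mid (a b : ℝ) (ha : 0 ≤ a) (hb : 0 ≤ b) :
    ((a + b) / 2) * Real.log ((a + b) / 2)
      ≤ (a * Real.log a) / 2 + (b * Real.log b) / 2 := by
  by_cases hab : a = b
  · subst hab; rw [show (a + a) / 2 = a by ring]; linarith
  · exact (IP_strict_mid a b ha hb hab).le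

/-- Existence, uniqueness and strict positivity of the I-projection of `Q`
onto a nonempty affine subset `E` of the open probability simplex. -/
theorem stmt_0 {k d : ℕ} (hk : 2 ≤ k)
    (Q : Fin k → ℝ) (hQpos : ∀ x, 0 < Q x) (hQsum : ∑ x, Q x = 1)
    (A : Matrix (Fin d) (Fin k) ℝ) (α : Fin d → ℝ)
    (E : Set (Fin k → ℝ))
    (hE : E = {P | (∀ x, 0 < P x) ∧ (∑ x, P x = 1) ∧ A.mulVec P = α})
    (hne : E.Nonempty) :
    ∃! Pstar : Fin k → ℝ,
      Pstar ∈ E ∧ (∀ x, 0 < Pstar x) ∧ ∀ P ∈ E, KL Pstar Q ≤ KL P Q := by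
  classical
  -- the function F, equal to KL · Q, continuous everywhere
  set F : (Fin k → ℝ) → ℝ :=
    fun P => ∑ x, (P x * Real.log (P x) - P x * Real.log (Q x)) with hF_def
  have hKF : ∀ P, KL P Q = F P := fun P => IP_KL_eq P Q (fun x => (hQpos x).ne')
  have hF_cont : Continuous F := by
    apply continuous_finset_sum
    intro x _
    exact (Real.continuous_mul_log.comp (continuous_apply x)).sub
      ((continuous_apply x).mul continuous_const)
  -- the compact convex set C
  set C : Set (Fin k → ℝ) :=
    {P | (∀ x, 0 ≤ P x) ∧ (∑ x, P x = 1) ∧ A.mulVec P = α} with hC_def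
  have hEC : E ⊆ C := by
    rw [hE]; rintro P ⟨h1, h2, h3⟩; exact ⟨fun x => (h1 x).le, h2, h3⟩
  have hle1 : ∀ P ∈ C, ∀ x, P x ≤ 1 := by
    rintro P ⟨h1, h2, -⟩ x
    calc P x ≤ ∑ y, P y := Finset.single_le_sum (fun y _ => h1 y) (Finset.mem_univ x)
    _ = 1 := h2
  have hC_closed : IsClosed C := by
    have h1 : IsClosed {P : Fin k → ℝ | ∀ x, 0 ≤ P x} := by
      have : {P : Fin k → ℝ | ∀ x, 0 ≤ P x} = ⋂ x, {P : Fin k → ℝ | 0 ≤ P x} := by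
        ext P; simp
      rw [this]
      exact isClosed_iInter fun x => isClosed_le continuous_const (continuous_apply x)
    have h2 : IsClosed {P : Fin k → ℝ | ∑ x, P x = 1} :=
      isClosed_eq (continuous_finset_sum _ fun x _ => continuous_apply x) continuous_const
    have h3 : IsClosed {P : Fin k → ℝ | A.mulVec P = α} :=
      isClosed_eq (A.mulVecLin.continuous_of_finiteDimensional) continuous_const
    have : C = {P : Fin k → ℝ | ∀ x, 0 ≤ P x} ∩
        ({P : Fin k → ℝ | ∑ x, P x = 1} ∩ {P : Fin k → ℝ | A.mulVec P = α}) := by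
      ext P; simp [hC_def, and_assoc]
    rw [this]
    exact h1.inter (h2.inter h3)
  have hC_bdd : Bornology.IsBounded C := by
    apply Metric.isBounded_closedBall (x := (0 : Fin k → ℝ)) (r := 1) |>.subset
    intro P hP
    rw [Metric.mem_closedBall, dist_zero_right]
    refine pi_norm_le_iff_of_nonneg zero_le_one |>.2 fun x => ?_
    rw [Real.norm_eq_abs, abs_of_nonneg (hP.1 x)]
    exact hle1 P hP x
  have hC_cpt : IsCompact C := Metric.isCompact_of_isClosed_isBounded hC_closed hC_bdd
  obtain ⟨P0, hP0E⟩ := hne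
  have hP0 : (∀ x, 0 < P0 x) ∧ (∑ x, P0 x = 1) ∧ A.mulVec P0 = α := by rwa [hE] at hP0E
  obtain ⟨Pm, hPmC, hPmMin⟩ := hC_cpt.exists_isMinOn ⟨P0, hEC hP0E⟩ hF_cont.continuousOn
  have hPmMin' : ∀ P ∈ C, F Pm ≤ F P := fun P hP => hPmMin hP
  -- strict positivity of the minimizer
  have hpos : ∀ x, 0 < Pm x := by
    by_contra hcon
    push_neg at hcon
    obtain ⟨x0, hx0⟩ := hcon
    have hx0' : Pm x0 = 0 := le_antisymm hx0 (hPmC.1 x0)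
    set m : ℝ := P0 x0 with hm_def
    have hm : 0 < m := hP0.1 x0
    set B : Fin k → ℝ := fun x =>
      |P0 x * (Real.log (P0 x) - Real.log (Q x))| +
        (Real.log 2 + |Real.log (Pm x)| + 1 + |Real.log (Q x)|) with hB_def
    have hB_nonneg : ∀ x, 0 ≤ B x := by
      intro x
      have h2 : (0:ℝ) ≤ Real.log 2 := Real.log_nonneg (by norm_num)
      positivity
    set S : ℝ := ∑ x, B x with hS_def
    have hS_nonneg : 0 ≤ S := Finset.sum_nonneg fun x _ => hB_nonneg x
    set t : ℝ := min (1/2) (Real.exp (-(S + 1) / m)) with ht_def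
    have ht_pos : 0 < t := lt_min (by norm_num) (Real.exp_pos _)
    have ht_half : t ≤ 1/2 := min_le_left _ _
    have ht_lt1 : t < 1 := lt_of_le_of_lt ht_half (by norm_num)
    have ht_log_neg : Real.log t < 0 := Real.log_neg ht_pos ht_lt1
    have ht_log : Real.log t ≤ -(S + 1) / m := by
      calc Real.log t ≤ Real.log (Real.exp (-(S + 1) / m)) :=
        Real.log_le_log ht_pos (min_le_right _ _)
      _ = -(S + 1) / m := Real.log_exp _
    set Pt : Fin k → ℝ := fun x => (1 - t) * Pm x + t * P0 x with hPt_def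
    have hPt_pos : ∀ x, 0 < Pt x := by
      intro x
      have h1 : 0 ≤ (1 - t) * Pm x := mul_nonneg (by linarith) (hPmC.1 x)
      have h2 : 0 < t * P0 x := mul_pos ht_pos (hP0.1 x)
      simp only [hPt_def]; linarith
    have hPt_mem : Pt ∈ C := by
      refine ⟨fun x => (hPt_pos x).le, ?_, ?_⟩
      · have : ∑ x, ((1 - t) * Pm x + t * P0 x)
            = (1 - t) * ∑ x, Pm x + t * ∑ x, P0 x := by
          rw [Finset.sum_add_distrib, Finset.mul_sum, Finset.mul_sum]
        simp only [hPt_def]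
        rw [this, hPmC.2.1, hP0.2.1]; ring
      · have heq : Pt = (1 - t) • Pm + t • P0 := by
          funext x; simp [hPt_def]
        rw [heq, Matrix.mulVec_add, Matrix.mulVec_smul, Matrix.mulVec_smul,
          hPmC.2.2, hP0.2.2]
        funext i; simp; ring
    have hPt_le1 : ∀ x, Pt x ≤ 1 := hle1 Pt hPt_mem
    -- per-coordinate bound
    have key : ∀ x, (Pt x * Real.log (Pt x) - Pt x * Real.log (Q x))
        - (Pm x * Real.log (Pm x) - Pm x * Real.log (Q x))
        ≤ t * B x + (if x = x0 then t * m * Real.log t else 0) := by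
      intro x
      by_cases hz : Pm x = 0
      · -- zero coordinate
        have hPtx : Pt x = t * P0 x := by simp [hPt_def, hz]
        have hlog : Real.log (t * P0 x) = Real.log t + Real.log (P0 x) :=
          Real.log_mul ht_pos.ne' (hP0.1 x).ne'
        have hmain : (Pt x * Real.log (Pt x) - Pt x * Real.log (Q x))
            - (Pm x * Real.log (Pm x) - Pm x * Real.log (Q x))
            = t * P0 x * Real.log t + t * (P0 x * (Real.log (P0 x) - Real.log (Q x))) := by
          rw [hPtx, hz, hlog]; ring
        rw [hmain]
        have h1 : t * (P0 x * (Real.log (P0 x) - Real.log (Q x))) ≤ t * B x := by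
          apply mul_le_mul_of_nonneg_left _ ht_pos.le
          calc P0 x * (Real.log (P0 x) - Real.log (Q x))
              ≤ |P0 x * (Real.log (P0 x) - Real.log (Q x))| := le_abs_self _
          _ ≤ B x := by
              simp only [hB_def]
              have h2 : (0:ℝ) ≤ Real.log 2 := Real.log_nonneg (by norm_num)
              have := abs_nonneg (Real.log (Pm x))
              have := abs_nonneg (Real.log (Q x))
              linarith
        by_cases hxx : x = x0
        · subst hxx
          simp only [if_pos rfl, if_true, eq_self_iff_true]
          have : t * P0 x * Real.log t = t * m * Real.log t := by rw [hm_def]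
          linarith
        · simp only [if_neg hxx]
          have hneg : t * P0 x * Real.log t ≤ 0 :=
            mul_nonpos_of_nonneg_of_nonpos (mul_nonneg ht_pos.le (hP0.1 x).le) ht_log_neg.le
          linarith
      · -- positive coordinate
        have hPmx : 0 < Pm x := lt_of_le_of_ne (hPmC.1 x) (Ne.symm hz)
        have hxx : x ≠ x0 := fun h => hz (h ▸ hx0')
        simp only [if_neg hxx, add_zero]
        have hgrad := IP_grad_ineq (Pm x) (Pt x) hPmx (hPt_pos x)
        have hdiff : Pt x - Pm x = t * (P0 x - Pm x) := by simp [hPt_def]; ring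
        -- bound |log (Pt x)|
        have hPt_lb : Pm x / 2 ≤ Pt x := by
          have h1 : (1 - t) * Pm x ≥ (1/2) * Pm x :=
            mul_le_mul_of_nonneg_right (by linarith) hPmx.le
          have h2 : 0 ≤ t * P0 x := mul_nonneg ht_pos.le (hP0.1 x).le
          simp only [hPt_def]; linarith
        have hlogPt_ub : Real.log (Pt x) ≤ 0 :=
          Real.log_nonpos (hPt_pos x).le (hPt_le1 x)
        have hlogPt_lb : Real.log (Pm x) - Real.log 2 ≤ Real.log (Pt x) := by
          have : Real.log (Pm x / 2) ≤ Real.log (Pt x) :=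
            Real.log_le_log (half_pos hPmx) hPt_lb
          rwa [Real.log_div hPmx.ne' (by norm_num), ] at this
        have habsPt : |Real.log (Pt x)| ≤ Real.log 2 + |Real.log (Pm x)| := by
          rw [abs_of_nonpos hlogPt_ub]
          have : -|Real.log (Pm x)| ≤ Real.log (Pm x) := neg_abs_le _
          linarith
        have habsD : |P0 x - Pm x| ≤ 1 := by
          have h1 : 0 < P0 x := hP0.1 x
          have h2 : P0 x ≤ 1 := hle1 P0 (hEC hP0E) x
          have h3 : Pm x ≤ 1 := hle1 Pm hPmC x
          rw [abs_sub_le_iff]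
          constructor <;> linarith [hPmC.1 x]
        have hchain : (Pt x * Real.log (Pt x) - Pt x * Real.log (Q x))
            - (Pm x * Real.log (Pm x) - Pm x * Real.log (Q x))
            ≤ t * ((P0 x - Pm x) * (Real.log (Pt x) + 1 - Real.log (Q x))) := by
          have : (Real.log (Pt x) + 1) * (Pt x - Pm x)
              - (Pt x - Pm x) * Real.log (Q x)
              = t * ((P0 x - Pm x) * (Real.log (Pt x) + 1 - Real.log (Q x))) := by
            rw [hdiff]; ring
          nlinarith [hgrad]
        refine hchain.trans ?_
        apply mul_le_mul_of_nonneg_left _ ht_pos.le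
        calc (P0 x - Pm x) * (Real.log (Pt x) + 1 - Real.log (Q x))
            ≤ |(P0 x - Pm x) * (Real.log (Pt x) + 1 - Real.log (Q x))| := le_abs_self _
        _ = |P0 x - Pm x| * |Real.log (Pt x) + 1 - Real.log (Q x)| := abs_mul _ _
        _ ≤ 1 * (|Real.log (Pt x)| + 1 + |Real.log (Q x)|) := by
            apply mul_le_mul habsD _ (abs_nonneg _) zero_le_one
            calc |Real.log (Pt x) + 1 - Real.log (Q x)|
                ≤ |Real.log (Pt x) + 1| + |Real.log (Q x)| := abs_sub _ _
            _ ≤ |Real.log (Pt x)| + |(1:ℝ)| + |Real.log (Q x)| := by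
                have := abs_add_le (Real.log (Pt x)) 1
                linarith
            _ = |Real.log (Pt x)| + 1 + |Real.log (Q x)| := by norm_num
        _ ≤ B x := by
            simp only [hB_def, one_mul]
            have := abs_nonneg (P0 x * (Real.log (P0 x) - Real.log (Q x)))
            linarith [habsPt]
    -- sum the bounds
    have hsum : F Pt - F Pm ≤ t * S + t * m * Real.log t := by
      have h1 : F Pt - F Pm = ∑ x, ((Pt x * Real.log (Pt x) - Pt x * Real.log (Q x))
          - (Pm x * Real.log (Pm x) - Pm x * Real.log (Q x))) := by
        simp only [hF_def]; rw [← Finset.sum_sub_distrib]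
      rw [h1]
      calc ∑ x, ((Pt x * Real.log (Pt x) - Pt x * Real.log (Q x))
          - (Pm x * Real.log (Pm x) - Pm x * Real.log (Q x)))
          ≤ ∑ x, (t * B x + (if x = x0 then t * m * Real.log t else 0)) :=
            Finset.sum_le_sum fun x _ => key x
      _ = t * S + t * m * Real.log t := by
          rw [Finset.sum_add_distrib, ← Finset.mul_sum, ← hS_def,
            Finset.sum_ite_eq' Finset.univ x0 (fun _ => t * m * Real.log t)]
          simp
    have hmt : t * m * Real.log t ≤ t * (-(S + 1)) := by
      have h1 : m * Real.log t ≤ -(S + 1) := by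
        have := mul_le_mul_of_nonneg_left ht_log hm.le
        rwa [mul_div_cancel₀ _ hm.ne'] at this
      calc t * m * Real.log t = t * (m * Real.log t) := by ring
      _ ≤ t * (-(S + 1)) := mul_le_mul_of_nonneg_left h1 ht_pos.le
    have hlt : F Pt < F Pm := by
      have : F Pt - F Pm ≤ -t := by
        have : t * S + t * (-(S + 1)) = -t := by ring
        linarith [hsum, hmt]
      linarith [ht_pos]
    exact absurd (hPmMin' Pt hPt_mem) (not_le.2 hlt)
  have hPmE : Pm ∈ E := by rw [hE]; exact ⟨hpos, hPmC.2.1, hPmC.2.2⟩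
  refine ⟨Pm, ⟨hPmE, hpos, fun P hP => by rw [hKF, hKF]; exact hPmMin' P (hEC hP)⟩, ?_⟩
  -- uniqueness
  rintro P' ⟨hP'E, hP'pos, hP'min⟩
  by_contra hne'
  obtain ⟨x1, hx1⟩ := Function.ne_iff.mp hne'
  have hP' : (∀ x, 0 < P' x) ∧ (∑ x, P' x = 1) ∧ A.mulVec P' = α := by rwa [hE] at hP'E
  have hmin_eq : F P' = F Pm := by
    have h1 := hP'min Pm hPmE
    have h2 := hPmMin' P' (hEC hP'E)
    rw [hKF, hKF] at h1
    linarith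
  set M : Fin k → ℝ := fun x => (P' x + Pm x) / 2 with hM_def
  have hME : M ∈ E := by
    rw [hE]
    refine ⟨fun x => by have := hP'pos x; have := hpos x; simp only [hM_def]; positivity,
      ?_, ?_⟩
    · have : ∑ x, (P' x + Pm x) / 2 = (∑ x, P' x + ∑ x, Pm x) / 2 := by
        rw [← Finset.sum_add_distrib, ← Finset.sum_div]
      simp only [hM_def]
      rw [this, hP'.2.1, hPmC.2.1]; norm_num
    · have heq : M = (1/2 : ℝ) • P' + (1/2 : ℝ) • Pm := by
        funext x; simp [hM_def]; ring
      rw [heq, Matrix.mulVec_add, Matrix.mulVec_smul, Matrix.mulVec_smul,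
        hP'.2.2, hPmC.2.2]
      funext i; simp; ring
  have hFM : F M < (F P' + F Pm) / 2 := by
    simp only [hF_def, hM_def]
    have hlin : ∀ x, (P' x + Pm x) / 2 * Real.log (Q x)
        = (P' x * Real.log (Q x) + Pm x * Real.log (Q x)) / 2 := fun x => by ring
    have hstep : ∀ x ∈ Finset.univ, ((P' x + Pm x) / 2) * Real.log ((P' x + Pm x) / 2)
        - ((P' x + Pm x) / 2) * Real.log (Q x)
        ≤ ((P' x * Real.log (P' x) - P' x * Real.log (Q x))
          + (Pm x * Real.log (Pm x) - Pm x * Real.log (Q x))) / 2 := by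
      intro x _
      have := IP_mid (P' x) (Pm x) (hP'pos x).le (hpos x).le
      rw [hlin x]; linarith
    have hstrict : ((P' x1 + Pm x1) / 2) * Real.log ((P' x1 + Pm x1) / 2)
        - ((P' x1 + Pm x1) / 2) * Real.log (Q x1)
        < ((P' x1 * Real.log (P' x1) - P' x1 * Real.log (Q x1))
          + (Pm x1 * Real.log (Pm x1) - Pm x1 * Real.log (Q x1))) / 2 := by
      have := IP_strict_mid (P' x1) (Pm x1) (hP'pos x1).le (hpos x1).le hx1
      rw [hlin x1]; linarith
    calc ∑ x, ((P' x + Pm x) / 2 * Real.log ((P' x + Pm x) / 2)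
          - (P' x + Pm x) / 2 * Real.log (Q x))
        < ∑ x, ((P' x * Real.log (P' x) - P' x * Real.log (Q x))
          + (Pm x * Real.log (Pm x) - Pm x * Real.log (Q x))) / 2 :=
          Finset.sum_lt_sum hstep ⟨x1, Finset.mem_univ x1, hstrict⟩
    _ = (∑ x, (P' x * Real.log (P' x) - P' x * Real.log (Q x))
          + ∑ x, (Pm x * Real.log (Pm x) - Pm x * Real.log (Q x))) / 2 := by
        rw [← Finset.sum_add_distrib, ← Finset.sum_div]
  have hcontra := hP'min M hME
  rw [hKF, hKF] at hcontra
  rw [hmin_eq] at hFM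
  simp only [add_div] at hFM
  linarith
end

section
/- Under the assumptions guaranteeing existence of the I-projection P* of Q onto the affine set E = {P ∈ Δ_k° : AP = α}, there exists a Lagrange multiplier θ* ∈ R^d such that P*(x) = Q(x) exp(−θ*ᵀ A_x) / Z, where A_x denotes the x-th column of A and Z = Σ_y Q(y) exp(−θ*ᵀ A_y) is the normalizing constant. -/
open Real Finset Matrix

/-- The I-projection onto an affine constraint set has exponential-tilt form:
`P*(x) = Q(x) exp(-θ*ᵀ A_x) / Z` with `Z = Σ_y Q(y) exp(-θ*ᵀ A_y)`. -/
theorem stmt_1 {k d : ℕ} (hk : 2 ≤ k)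
    (Q : Fin k → ℝ) (hQpos : ∀ x, 0 < Q x) (hQsum : ∑ x, Q x = 1)
    (A : Matrix (Fin d) (Fin k) ℝ) (α : Fin d → ℝ)
    (E : Set (Fin k → ℝ))
    (hE : E = {P | (∀ x, 0 < P x) ∧ (∑ x, P x = 1) ∧ A.mulVec P = α})
    (Pstar : Fin k → ℝ) (hPmem : Pstar ∈ E)
    (hPmin : ∀ P ∈ E, KL Pstar Q ≤ KL P Q) :
    ∃ θ : Fin d → ℝ, ∀ x : Fin k,
      Pstar x = Q x * Real.exp (-(∑ i, θ i * A i x)) /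
        (∑ y, Q y * Real.exp (-(∑ i, θ i * A i y))) := by
  rw [hE] at hPmem
  obtain ⟨hPpos, hPsum, hPA⟩ := hPmem
  set g : Fin k → ℝ := fun x => Real.log (Pstar x / Q x) with hgdef
  -- Step 1: first-order optimality: g is orthogonal to directions in the constraint set.
  have key : ∀ v : Fin k → ℝ, (∑ x, v x = 0) → A.mulVec v = 0 →
      ∑ x, v x * g x = 0 := by
    intro v hv1 hv2
    set F : ℝ → ℝ :=
      fun t => ∑ x, (Pstar x + t * v x) * Real.log ((Pstar x + t * v x) / Q x) with hFdef
    have hpos : ∀ᶠ t in nhds (0 : ℝ), ∀ x, 0 < Pstar x + t * v x := by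
      rw [Filter.eventually_all]
      intro x
      have hcont : Filter.Tendsto (fun t : ℝ => Pstar x + t * v x) (nhds 0)
          (nhds (Pstar x + 0 * v x)) :=
        (continuous_const.add (continuous_id.mul continuous_const)).tendsto 0
      rw [zero_mul, add_zero] at hcont
      exact hcont.eventually (eventually_gt_nhds (hPpos x))
    have hmin : IsLocalMin F 0 := by
      filter_upwards [hpos] with t ht
      have hmem : (fun x => Pstar x + t * v x) ∈ E := by
        rw [hE]
        refine ⟨ht, ?_, ?_⟩
        · rw [Finset.sum_add_distrib, hPsum, ← Finset.mul_sum, hv1, mul_zero, add_zero]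
        · have : (fun x => Pstar x + t * v x) = Pstar + t • v := by
            funext x; simp [Pi.add_apply, Pi.smul_apply]
          rw [this, Matrix.mulVec_add, hPA, Matrix.mulVec_smul, hv2, smul_zero, add_zero]
      have h := hPmin _ hmem
      simpa [KL, hFdef] using h
    have hderiv : HasDerivAt F (∑ x, v x * (g x + 1)) 0 := by
      apply HasDerivAt.fun_sum
      intro x _
      have h1 : HasDerivAt (fun t : ℝ => Pstar x + t * v x) (v x) 0 := by
        simpa using ((hasDerivAt_id (0 : ℝ)).mul_const (v x)).const_add (Pstar x)
      have hne : (Pstar x + 0 * v x) / Q x ≠ 0 := by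
        rw [zero_mul, add_zero]
        exact div_ne_zero (hPpos x).ne' (hQpos x).ne'
      have h2 : HasDerivAt (fun t : ℝ => Real.log ((Pstar x + t * v x) / Q x))
          ((v x / Q x) / ((Pstar x + 0 * v x) / Q x)) 0 :=
        (h1.div_const (Q x)).log hne
      have h3 := h1.mul h2
      refine h3.congr_deriv ?_
      rw [zero_mul, add_zero]
      have hq := (hQpos x).ne'
      have hp := (hPpos x).ne'
      field_simp
      ring
    have h0 : ∑ x, v x * (g x + 1) = 0 := hmin.hasDerivAt_eq_zero hderiv
    have hsplit : ∑ x, v x * (g x + 1) = (∑ x, v x * g x) + ∑ x, v x := by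
      rw [← Finset.sum_add_distrib]
      congr 1; funext x; ring
    rw [hsplit, hv1, add_zero] at h0
    exact h0
  -- Step 2: g lies in span of rows of A and the constant vector.
  classical
  set toE : (Fin k → ℝ) → EuclideanSpace ℝ (Fin k) := fun f => (WithLp.equiv 2 (Fin k → ℝ)).symm f with htoE
  set ones : EuclideanSpace ℝ (Fin k) := toE (fun _ => 1) with honesdef
  set W : Submodule ℝ (EuclideanSpace ℝ (Fin k)) :=
    Submodule.span ℝ (insert ones (Set.range fun i => toE (A i)))
    with hWdef
  have hgW : toE g ∈ W := by
    rw [← Submodule.orthogonal_orthogonal W, Submodule.mem_orthogonal]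
    intro v hv
    rw [Submodule.mem_orthogonal] at hv
    have hones : ∑ x, v x = 0 := by
      have := hv ones (Submodule.subset_span (Set.mem_insert _ _))
      simpa [honesdef, htoE, PiLp.inner_apply, RCLike.inner_apply] using this
    have hrows : A.mulVec v = 0 := by
      funext i
      have := hv (toE (A i)) (Submodule.subset_span (Set.mem_insert_of_mem _ ⟨i, rfl⟩))
      simpa [htoE, Matrix.mulVec, dotProduct, PiLp.inner_apply, RCLike.inner_apply, mul_comm]
        using this
    have := key v hones hrows
    simpa [htoE, PiLp.inner_apply, RCLike.inner_apply, mul_comm] using this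
  rw [hWdef, Submodule.mem_span_insert] at hgW
  obtain ⟨a, z, hz, hgz⟩ := hgW
  rw [Submodule.mem_span_range_iff_exists_fun ℝ] at hz
  obtain ⟨c, hc⟩ := hz
  have hgx : ∀ x, g x = a + ∑ i, c i * A i x := by
    intro x
    have h1 : toE g x = (a • ones + z) x := by rw [← hgz]
    have hzx : z x = ∑ i, c i * A i x := by
      rw [← hc]
      have : (∑ i : Fin d, c i • A i) x = ∑ i, c i * A i x := by
        simp [Finset.sum_apply]
      simp [htoE, Finset.sum_apply]
    have h2 : (a • ones + z) x = a + z x := by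
      simp [PiLp.add_apply, PiLp.smul_apply, honesdef, htoE]
    rw [h2, hzx] at h1
    simpa [htoE] using h1
  -- Step 3: conclude the exponential form.
  refine ⟨fun i => -c i, fun x => ?_⟩
  have hexp : ∀ x, Pstar x = Q x * Real.exp (a + ∑ i, c i * A i x) := by
    intro x
    have h1 : Real.exp (g x) = Pstar x / Q x :=
      Real.exp_log (div_pos (hPpos x) (hQpos x))
    rw [← hgx x, h1]
    field_simp
    rw [mul_div_assoc, div_self (hQpos x).ne', mul_one]
  have hneg : ∀ y, -(∑ i, (fun i => -c i) i * A i y) = ∑ i, c i * A i y := by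
    intro y
    rw [← Finset.sum_neg_distrib]
    congr 1; funext i; ring
  have hZ : (∑ y, Q y * Real.exp (-(∑ i, (fun i => -c i) i * A i y))) = Real.exp (-a) := by
    have h1 : (1 : ℝ) = ∑ y, Q y * Real.exp (a + ∑ i, c i * A i y) := by
      rw [← hPsum]; exact Finset.sum_congr rfl fun y _ => hexp y
    have h2 : ∑ y, Q y * Real.exp (a + ∑ i, c i * A i y)
        = Real.exp a * ∑ y, Q y * Real.exp (∑ i, c i * A i y) := by
      rw [Finset.mul_sum]
      exact Finset.sum_congr rfl fun y _ => by rw [Real.exp_add]; ring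
    have h3 : ∑ y, Q y * Real.exp (∑ i, c i * A i y) = Real.exp (-a) := by
      have hea : Real.exp a ≠ 0 := Real.exp_ne_zero a
      have : Real.exp a * ∑ y, Q y * Real.exp (∑ i, c i * A i y) = 1 := by
        rw [← h2, ← h1]
      rw [Real.exp_neg]
      field_simp at this ⊢
      linarith [this]
    rw [← h3]
    exact Finset.sum_congr rfl fun y _ => by rw [hneg y]
  rw [hZ, hneg x, hexp x, Real.exp_add, Real.exp_neg]
  field_simp
end

section
/- Let P and Q be strictly positive probability distributions on a finite set X of size k, and suppose P lies in the affine set E = {R ∈ Δ_k° : AR = α} containing the I-projection P* of Q onto E. Then D(P‖Q) = D(P*‖Q) + D(P‖P*). (Pythagorean identity for I-projections onto affine sets.) -/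
open Real Finset Matrix

private lemma mul_log_div_aux (p q : ℝ) (hq : q ≠ 0) :
    p * Real.log (p / q) = p * (Real.log p - Real.log q) := by
  rcases eq_or_ne p 0 with h | h
  · simp [h]
  · rw [Real.log_div h hq]

/-- Pythagorean identity for the I-projection onto an affine set:
for any `P ∈ E`, `D(P‖Q) = D(P*‖Q) + D(P‖P*)`. -/
theorem stmt_2 {k d : ℕ} (hk : 2 ≤ k)
    (Q : Fin k → ℝ) (hQpos : ∀ x, 0 < Q x) (hQsum : ∑ x, Q x = 1)
    (A : Matrix (Fin d) (Fin k) ℝ) (α : Fin d → ℝ)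
    (E : Set (Fin k → ℝ))
    (hE : E = {R | (∀ x, 0 < R x) ∧ (∑ x, R x = 1) ∧ A.mulVec R = α})
    (Pstar : Fin k → ℝ) (hPmem : Pstar ∈ E)
    (hPmin : ∀ R ∈ E, KL Pstar Q ≤ KL R Q)
    (P : Fin k → ℝ) (hP : P ∈ E) :
    KL P Q = KL Pstar Q + KL P Pstar := by
  subst hE
  obtain ⟨hP0, hP1, hP2⟩ := hP
  obtain ⟨hS0, hS1, hS2⟩ := hPmem
  have hk' : Nonempty (Fin k) := ⟨⟨0, by omega⟩⟩
  set v : Fin k → ℝ := fun x => P x - Pstar x with hv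
  have hvsum : ∑ x, v x = 0 := by
    simp [hv, Finset.sum_sub_distrib, hP1, hS1]
  have hAv : ∀ i, ∑ x, A i x * v x = 0 := by
    intro i
    have h1 : A.mulVec P i = α i := by rw [hP2]
    have h2 : A.mulVec Pstar i = α i := by rw [hS2]
    simp only [Matrix.mulVec, dotProduct] at h1 h2
    simp [hv, mul_sub, Finset.sum_sub_distrib, h1, h2]
  set ε : ℝ := Finset.univ.inf' Finset.univ_nonempty (fun x => Pstar x / (|v x| + 1)) with hε
  have hεpos : 0 < ε := by
    rw [hε]
    apply (Finset.lt_inf'_iff Finset.univ_nonempty).mpr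
    intro x _
    exact div_pos (hS0 x) (by positivity)
  have hpos : ∀ t : ℝ, |t| < ε → ∀ x, 0 < Pstar x + t * v x := by
    intro t ht x
    have hle : ε ≤ Pstar x / (|v x| + 1) :=
      Finset.inf'_le _ (Finset.mem_univ x)
    have h1 : |t| * (|v x| + 1) < Pstar x := by
      have : |t| < Pstar x / (|v x| + 1) := lt_of_lt_of_le ht hle
      have hb : (0:ℝ) < |v x| + 1 := by positivity
      calc |t| * (|v x| + 1) < (Pstar x / (|v x| + 1)) * (|v x| + 1) := by
            exact mul_lt_mul_of_pos_right this hb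
        _ = Pstar x := by field_simp
    have h2 : |t * v x| ≤ |t| * (|v x| + 1) := by
      rw [abs_mul]
      nlinarith [abs_nonneg t, abs_nonneg (v x)]
    have := neg_abs_le (t * v x)
    nlinarith
  have hmem : ∀ t : ℝ, |t| < ε →
      (fun x => Pstar x + t * v x) ∈
        {R : Fin k → ℝ | (∀ x, 0 < R x) ∧ (∑ x, R x = 1) ∧ A.mulVec R = α} := by
    intro t ht
    refine ⟨hpos t ht, ?_, ?_⟩
    · rw [Finset.sum_add_distrib, hS1, ← Finset.mul_sum, hvsum, mul_zero, add_zero]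
    · funext i
      have : A.mulVec Pstar i = α i := by rw [hS2]
      simp only [Matrix.mulVec, dotProduct] at this ⊢
      have expand : ∀ x, A i x * (Pstar x + t * v x)
          = A i x * Pstar x + t * (A i x * v x) := by intro x; ring
      rw [Finset.sum_congr rfl (fun x _ => expand x), Finset.sum_add_distrib,
        ← Finset.mul_sum, hAv i, mul_zero, add_zero, this]
  set g : ℝ → ℝ := fun t =>
    ∑ x, (Pstar x + t * v x) * (Real.log (Pstar x + t * v x) - Real.log (Q x)) with hg
  have hgKL : ∀ t, g t = KL (fun x => Pstar x + t * v x) Q := by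
    intro t
    rw [hg]
    unfold KL
    exact (Finset.sum_congr rfl fun x _ =>
      (mul_log_div_aux _ _ (hQpos x).ne')).symm
  have hg0 : g 0 = KL Pstar Q := by
    rw [hgKL]; simp [KL]
  have hloc : IsLocalMin g 0 := by
    filter_upwards [Metric.ball_mem_nhds (0:ℝ) hεpos] with t ht
    have ht' : |t| < ε := by simpa [Real.dist_eq] using ht
    rw [hg0, hgKL]
    exact hPmin _ (hmem t ht')
  have hderiv : HasDerivAt g
      (∑ x, (v x * (Real.log (Pstar x) - Real.log (Q x)) + v x)) 0 := by
    rw [hg]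
    apply HasDerivAt.fun_sum
    intro x _
    have h1 : HasDerivAt (fun t : ℝ => Pstar x + t * v x) (v x) 0 := by
      simpa using ((hasDerivAt_id (0:ℝ)).mul_const (v x)).const_add (Pstar x)
    have hne : Pstar x + 0 * v x ≠ 0 := by simpa using (hS0 x).ne'
    have h2 : HasDerivAt
        (fun t : ℝ => Real.log (Pstar x + t * v x) - Real.log (Q x))
        (v x / (Pstar x + 0 * v x)) 0 := (h1.log hne).sub_const _
    have h3 := h1.fun_mul h2
    convert h3 using 1
    · rfl
    have hsne : Pstar x ≠ 0 := (hS0 x).ne'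
    simp only [zero_mul, add_zero]
    field_simp
  have hD := hloc.hasDerivAt_eq_zero hderiv
  have key : ∑ x, v x * (Real.log (Pstar x) - Real.log (Q x)) = 0 := by
    rw [Finset.sum_add_distrib, hvsum, add_zero] at hD
    exact hD
  have main : KL P Q - KL Pstar Q - KL P Pstar
      = ∑ x, v x * (Real.log (Pstar x) - Real.log (Q x)) := by
    unfold KL
    rw [← Finset.sum_sub_distrib, ← Finset.sum_sub_distrib]
    apply Finset.sum_congr rfl
    intro x _
    rw [mul_log_div_aux _ _ (hQpos x).ne', mul_log_div_aux _ _ (hQpos x).ne',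
      mul_log_div_aux _ _ (hS0 x).ne']
    simp only [hv]
    ring
  rw [key] at main
  linarith
end

section
/- Let P be a probability distribution on a finite set X with p_min = min_x P(x) > 0, based on an urn of n items with composition exactly nP (each nP(x) a nonnegative integer). Let μ_hyp be the law of m draws without replacement from this urn (m ≤ n), and P^⊗m the law of m i.i.d. draws from P. Then the total variation distance satisfies ‖μ_hyp − P^⊗m‖_TV ≤ m(m−1)/(2 n p_min). -/
open Finset

/-- The law of `m` ordered draws without replacement from an urn of `n` items
whose composition is exactly `n·P` (with `c x = n·P(x)` items of type `x`):
the probability of the ordered tuple `x` is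
`∏_i (c(x_i) - #{j < i : x_j = x_i}) / (n - i)`. -/
noncomputable def hypLaw {k m n : ℕ} (c : Fin k → ℕ) (x : Fin m → Fin k) : ℝ :=
  ∏ i : Fin m,
    ((c (x i) : ℝ) -
        (Finset.univ.filter (fun j : Fin m => j < i ∧ x j = x i)).card) /
      ((n : ℝ) - (i : ℕ))

/-- The law of `m` i.i.d. draws from `P`. -/
noncomputable def iidLaw {k m : ℕ} (P : Fin k → ℝ) (x : Fin m → Fin k) : ℝ :=
  ∏ i : Fin m, P (x i)

lemma filtercard_snoc_castSucc {k m : ℕ} (y : Fin m → Fin k) (v : Fin k) (i : Fin m) :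
    (Finset.univ.filter (fun j : Fin (m+1) => j < i.castSucc ∧ (Fin.snoc y v : Fin (m+1) → Fin k) j = (Fin.snoc y v : Fin (m+1) → Fin k) i.castSucc)).card
      = (Finset.univ.filter (fun j : Fin m => j < i ∧ y j = y i)).card := by
  rw [eq_comm]
  apply Finset.card_bij (fun j _ => j.castSucc)
  · intro a ha
    simp only [mem_filter, mem_univ, true_and] at ha ⊢
    simp [Fin.snoc_castSucc, ha.1, ha.2, Fin.castSucc_lt_castSucc_iff]
  · intro a _ b _ h
    exact Fin.castSucc_injective _ h
  · intro b hb
    simp only [mem_filter, mem_univ, true_and] at hb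
    have hlt : b < Fin.last m := lt_trans hb.1 (Fin.castSucc_lt_last i)
    refine ⟨b.castPred (Fin.ne_last_of_lt hlt), ?_, ?_⟩
    · simp only [mem_filter, mem_univ, true_and]
      constructor
      · have := hb.1
        rw [show b = (b.castPred (Fin.ne_last_of_lt hlt)).castSucc by simp] at this
        exact (Fin.castSucc_lt_castSucc_iff).mp this
      · have hb2 := hb.2
        rw [show b = (b.castPred (Fin.ne_last_of_lt hlt)).castSucc by simp, Fin.snoc_castSucc,
          Fin.snoc_castSucc] at hb2
        exact hb2
    · simp

lemma filtercard_snoc_last {k m : ℕ} (y : Fin m → Fin k) (v : Fin k) :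
    (Finset.univ.filter (fun j : Fin (m+1) => j < Fin.last m ∧ (Fin.snoc y v : Fin (m+1) → Fin k) j = (Fin.snoc y v : Fin (m+1) → Fin k) (Fin.last m))).card
      = (Finset.univ.filter (fun j : Fin m => y j = v)).card := by
  rw [eq_comm]
  apply Finset.card_bij (fun j _ => j.castSucc)
  · intro a ha
    simp only [mem_filter, mem_univ, true_and] at ha ⊢
    simp [Fin.snoc_castSucc, Fin.snoc_last, ha, Fin.castSucc_lt_last]
  · intro a _ b _ h
    exact Fin.castSucc_injective _ h
  · intro b hb
    simp only [mem_filter, mem_univ, true_and] at hb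
    refine ⟨b.castPred (Fin.ne_last_of_lt hb.1), ?_, by simp⟩
    simp only [mem_filter, mem_univ, true_and]
    have hb2 := hb.2
    rw [show b = (b.castPred (Fin.ne_last_of_lt hb.1)).castSucc by simp, Fin.snoc_castSucc] at hb2
    simpa using hb2

lemma hypLaw_snoc {k m n : ℕ} (c : Fin k → ℕ) (y : Fin m → Fin k) (v : Fin k) :
    hypLaw (n := n) c (Fin.snoc y v) =
      hypLaw (n := n) c y *
        (((c v : ℝ) - (Finset.univ.filter (fun j : Fin m => y j = v)).card) / ((n : ℝ) - m)) := by
  unfold hypLaw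
  rw [Fin.prod_univ_castSucc]
  congr 1
  · apply Finset.prod_congr rfl
    intro i _
    rw [filtercard_snoc_castSucc, Fin.snoc_castSucc]
    norm_num
  · rw [filtercard_snoc_last, Fin.snoc_last]
    norm_num

lemma count_sum {k m : ℕ} (y : Fin m → Fin k) :
    ∑ v : Fin k, ((Finset.univ.filter (fun j : Fin m => y j = v)).card : ℝ) = m := by
  have := Finset.card_eq_sum_card_fiberwise (f := y) (s := (univ : Finset (Fin m)))
    (t := (univ : Finset (Fin k))) (fun x _ => mem_univ _)
  rw [card_univ, Fintype.card_fin] at this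
  exact_mod_cast this.symm

lemma hypLaw_sum {k : ℕ} : ∀ {m : ℕ} {n : ℕ} (c : Fin k → ℕ),
    (∑ x, (c x : ℝ)) = n → m ≤ n → ∑ x : Fin m → Fin k, hypLaw (n := n) c x = 1 := by
  intro m
  induction m with
  | zero =>
    intro n c hcs hm
    rw [Fintype.sum_eq_single (fun i => i.elim0)]
    · simp [hypLaw]
    · intro x hx
      exact absurd (funext fun i => i.elim0) hx
  | succ m ih =>
    intro n c hcs hm
    rw [← Fintype.sum_equiv (Fin.snocEquiv (fun _ => Fin k))
      (fun p => hypLaw (n := n) c (Fin.snocEquiv _ p)) (fun x => hypLaw (n := n) c x)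
      (fun p => rfl)]
    rw [Fintype.sum_prod_type]
    have hne : (n : ℝ) - m ≠ 0 := by
      have : (m : ℝ) < n := by exact_mod_cast Nat.lt_of_succ_le hm
      linarith
    have key : ∀ v : Fin k, ∀ y : Fin m → Fin k,
        hypLaw (n := n) c (Fin.snocEquiv (fun _ => Fin k) (v, y)) =
        hypLaw (n := n) c y *
          (((c v : ℝ) - (Finset.univ.filter (fun j : Fin m => y j = v)).card) / ((n : ℝ) - m)) := by
      intro v y
      have : Fin.snocEquiv (fun _ => Fin k) (v, y) = Fin.snoc y v := rfl
      rw [this, hypLaw_snoc]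
    calc ∑ v : Fin k, ∑ y : Fin m → Fin k,
          hypLaw (n := n) c (Fin.snocEquiv (fun _ => Fin k) (v, y))
        = ∑ y : Fin m → Fin k, hypLaw (n := n) c y *
            ((∑ v : Fin k, (((c v : ℝ)) - (Finset.univ.filter (fun j : Fin m => y j = v)).card)) / ((n : ℝ) - m)) := by
          rw [Finset.sum_comm]
          apply Finset.sum_congr rfl
          intro y _
          rw [Finset.sum_div, Finset.mul_sum]
          apply Finset.sum_congr rfl
          intro v _
          rw [key v y]
      _ = ∑ y : Fin m → Fin k, hypLaw (n := n) c y := by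
          apply Finset.sum_congr rfl
          intro y _
          rw [Finset.sum_sub_distrib, hcs, count_sum, div_self hne, mul_one]
      _ = 1 := ih c hcs (Nat.le_of_succ_le hm)

lemma hypLaw_nonneg {k m n : ℕ} (hm : m ≤ n) (c : Fin k → ℕ) (x : Fin m → Fin k) :
    0 ≤ hypLaw (n := n) c x := by
  set A : Fin m → ℕ := fun i => (Finset.univ.filter (fun j : Fin m => j < i ∧ x j = x i)).card with hA
  have hden : ∀ i : Fin m, (0:ℝ) < (n : ℝ) - (i : ℕ) := by
    intro i
    have : (i : ℕ) < n := lt_of_lt_of_le i.isLt hm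
    have : ((i : ℕ) : ℝ) < n := by exact_mod_cast this
    linarith
  by_cases h : ∀ i, A i ≤ c (x i)
  · apply Finset.prod_nonneg
    intro i _
    apply div_nonneg _ (le_of_lt (hden i))
    have := h i
    have : ((A i : ℝ)) ≤ c (x i) := by exact_mod_cast this
    simpa [hA] using sub_nonneg.mpr this
  · push_neg at h
    obtain ⟨i, hi⟩ := h
    set T := Finset.univ.filter (fun i => c (x i) ≤ A i) with hT
    have hTne : T.Nonempty := ⟨i, by simp [hT, le_of_lt hi]⟩
    set i₀ := T.min' hTne with hi₀
    have h₀ : c (x i₀) ≤ A i₀ := by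
      have := T.min'_mem hTne
      simpa [hT] using this
    rcases eq_or_lt_of_le h₀ with heq | hlt
    · unfold hypLaw
      rw [Finset.prod_eq_zero (Finset.mem_univ i₀)]
      have : ((c (x i₀) : ℝ)) = A i₀ := by exact_mod_cast heq
      rw [show ((#(filter (fun j => j < i₀ ∧ x j = x i₀) univ) : ℕ) : ℝ) = ((A i₀ : ℕ) : ℝ) from rfl, ← this]
      simp
    · exfalso
      set Q := Finset.univ.filter (fun j : Fin m => j < i₀ ∧ x j = x i₀) with hQ
      have hQcard : Q.card = A i₀ := rfl
      have hQne : Q.Nonempty := by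
        rw [← Finset.card_pos, hQcard]
        omega
      set j := Q.max' hQne with hj
      have hjQ : j ∈ Q := Q.max'_mem hQne
      have hjlt : j < i₀ := by
        have := hjQ; simp only [hQ, mem_filter] at this; exact this.2.1
      have hjx : x j = x i₀ := by
        have := hjQ; simp only [hQ, mem_filter] at this; exact this.2.2
      have hsub : Q.erase j ⊆ Finset.univ.filter (fun j' : Fin m => j' < j ∧ x j' = x j) := by
        intro j' hj'
        rw [Finset.mem_erase] at hj'
        obtain ⟨hne, hj'Q⟩ := hj'
        simp only [hQ, mem_filter] at hj'Q
        simp only [mem_filter, mem_univ, true_and]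
        refine ⟨lt_of_le_of_ne (Q.le_max' j' (by simp [hQ, hj'Q.2])) hne, ?_⟩
        rw [hj'Q.2.2, hjx]
      have hAj : c (x j) ≤ A j := by
        have h1 : (Q.erase j).card ≤ A j := Finset.card_le_card hsub
        have h2 : (Q.erase j).card = Q.card - 1 := Finset.card_erase_of_mem hjQ
        rw [hQcard] at h2
        have : c (x j) = c (x i₀) := by rw [hjx]
        omega
      have : j ∈ T := by simp [hT, hAj]
      exact absurd (T.min'_le j this) (not_le.mpr hjlt)

lemma wei {ι : Type*} [DecidableEq ι] (s : Finset ι) (t : ι → ℝ) (h0 : ∀ i ∈ s, 0 ≤ t i)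
    (h1 : ∀ i ∈ s, t i ≤ 1) : 1 - ∑ i ∈ s, t i ≤ ∏ i ∈ s, (1 - t i) := by
  induction s using Finset.induction with
  | empty => simp
  | insert a s hnotmem ih =>
    rw [Finset.sum_insert hnotmem, Finset.prod_insert hnotmem]
    have ih' := ih (fun i hi => h0 i (mem_insert_of_mem hi)) (fun i hi => h1 i (mem_insert_of_mem hi))
    have ha0 := h0 a (mem_insert_self a s)
    have ha1 := h1 a (mem_insert_self a s)
    have hs0 : 0 ≤ ∑ i ∈ s, t i := Finset.sum_nonneg (fun i hi => h0 i (mem_insert_of_mem hi))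
    nlinarith [ih']

lemma A_le {k m : ℕ} (x : Fin m → Fin k) (i : Fin m) :
    ((Finset.univ.filter (fun j : Fin m => j < i ∧ x j = x i)).card : ℕ) ≤ (i : ℕ) := by
  calc (Finset.univ.filter (fun j : Fin m => j < i ∧ x j = x i)).card
      ≤ (Finset.univ.filter (fun j : Fin m => j < i)).card := by
        apply Finset.card_le_card
        intro j hj
        simp only [mem_filter, mem_univ, true_and] at hj ⊢
        exact hj.1
    _ = (i : ℕ) := by
        rw [show Finset.univ.filter (fun j : Fin m => j < i) = Finset.Iio i by
          ext j; simp [Finset.mem_Iio]]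
        exact Fin.card_Iio i

lemma gauss (m : ℕ) : (∑ i : Fin m, ((i : ℕ) : ℝ)) * 2 = (m : ℝ) * ((m : ℝ) - 1) := by
  rw [Fin.sum_univ_eq_sum_range (fun i => ((i : ℕ) : ℝ)) m]
  cases m with
  | zero => simp
  | succ j =>
    have h := Finset.sum_range_id_mul_two (j + 1)
    have h2 : ((∑ i ∈ Finset.range (j + 1), i : ℕ) : ℝ) * 2 = ((j + 1) * j : ℕ) := by
      exact_mod_cast h
    push_cast at h2 ⊢
    rw [h2]; ring

lemma hypLaw_ge {k m n : ℕ} (hn : 0 < n) (hm : m ≤ n)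
    (P : Fin k → ℝ) (hPpos : ∀ x, 0 < P x)
    (c : Fin k → ℕ) (hc : ∀ x, (c x : ℝ) = n * P x)
    (pmin : ℝ) (hpmin0 : 0 < pmin) (hpminle : ∀ x, pmin ≤ P x)
    (hsmall : (m : ℝ) * ((m : ℝ) - 1) < 2 * n * pmin)
    (x : Fin m → Fin k) :
    (1 - (m : ℝ) * ((m : ℝ) - 1) / (2 * n * pmin)) * iidLaw P x ≤ hypLaw (n := n) c x := by
  set A : Fin m → ℕ := fun i => (Finset.univ.filter (fun j : Fin m => j < i ∧ x j = x i)).card with hA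
  have hnR : (0:ℝ) < n := by exact_mod_cast hn
  set t : Fin m → ℝ := fun i => (A i : ℝ) / ((n : ℝ) * P (x i)) with ht
  have hAle : ∀ i : Fin m, (A i : ℝ) ≤ (i : ℕ) := fun i => by exact_mod_cast A_le x i
  have hi_half : ∀ i : Fin m, ((i : ℕ) : ℝ) ≤ (m : ℝ) * ((m : ℝ) - 1) / 2 := by
    intro i
    have h1 : 2 * (i : ℕ) ≤ m * (m - 1) := by
      have := i.isLt
      rcases Nat.eq_zero_or_pos (i : ℕ) with h | h
      · simp [h]
      · have hm2 : 2 ≤ m := by omega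
        calc 2 * (i : ℕ) ≤ 2 * (m - 1) := by omega
          _ ≤ m * (m - 1) := Nat.mul_le_mul_right _ hm2
    have h2 : (2 : ℝ) * (i : ℕ) ≤ (m : ℝ) * ((m : ℝ) - 1) := by
      rcases Nat.eq_zero_or_pos m with h | h
      · omega
      · have : ((m - 1 : ℕ) : ℝ) = (m : ℝ) - 1 := by
          rw [Nat.cast_sub h]; simp
        rw [← this]
        exact_mod_cast h1
    linarith
  have hnum : ∀ i : Fin m, (A i : ℝ) ≤ (n : ℝ) * P (x i) := by
    intro i
    calc (A i : ℝ) ≤ (i : ℕ) := hAle i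
      _ ≤ (m : ℝ) * ((m : ℝ) - 1) / 2 := hi_half i
      _ ≤ (n : ℝ) * pmin := by linarith
      _ ≤ (n : ℝ) * P (x i) := by
          exact mul_le_mul_of_nonneg_left (hpminle (x i)) (le_of_lt hnR)
  have ht0 : ∀ i ∈ (univ : Finset (Fin m)), 0 ≤ t i := by
    intro i _
    apply div_nonneg (Nat.cast_nonneg _)
    exact le_of_lt (mul_pos hnR (hPpos (x i)))
  have ht1 : ∀ i ∈ (univ : Finset (Fin m)), t i ≤ 1 := by
    intro i _
    rw [ht, div_le_one (mul_pos hnR (hPpos (x i)))]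
    exact hnum i
  have step1 : ∏ i : Fin m, ((1 - t i) * P (x i)) ≤ hypLaw (n := n) c x := by
    apply Finset.prod_le_prod
    · intro i _
      have := ht1 i (mem_univ i)
      have := hPpos (x i)
      nlinarith
    · intro i _
      have hPi := hPpos (x i)
      have hfac : (1 - t i) * P (x i) = ((n : ℝ) * P (x i) - A i) / n := by
        rw [ht]
        field_simp
      rw [hfac, hc (x i)]
      have hdeni : (0:ℝ) < (n : ℝ) - (i : ℕ) := by
        have : (i : ℕ) < n := lt_of_lt_of_le i.isLt hm
        have : ((i : ℕ) : ℝ) < n := by exact_mod_cast this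
        linarith
      apply div_le_div_of_nonneg_left (sub_nonneg.mpr (hnum i)) hdeni
      have : (0:ℝ) ≤ (i : ℕ) := Nat.cast_nonneg _
      linarith
  calc (1 - (m : ℝ) * ((m : ℝ) - 1) / (2 * n * pmin)) * iidLaw P x
      ≤ (1 - ∑ i : Fin m, t i) * iidLaw P x := by
        apply mul_le_mul_of_nonneg_right _ (Finset.prod_nonneg fun i _ => le_of_lt (hPpos (x i)))
        have hsum : ∑ i : Fin m, t i ≤ (m : ℝ) * ((m : ℝ) - 1) / (2 * n * pmin) := by
          have h1 : ∀ i ∈ (univ : Finset (Fin m)), t i ≤ ((i : ℕ) : ℝ) / ((n : ℝ) * pmin) := by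
            intro i _
            rw [ht]
            apply div_le_div₀ (Nat.cast_nonneg _) (hAle i) (mul_pos hnR hpmin0)
            exact mul_le_mul_of_nonneg_left (hpminle (x i)) (le_of_lt hnR)
          calc ∑ i : Fin m, t i ≤ ∑ i : Fin m, ((i : ℕ) : ℝ) / ((n : ℝ) * pmin) :=
              Finset.sum_le_sum h1
            _ = (∑ i : Fin m, ((i : ℕ) : ℝ)) / ((n : ℝ) * pmin) := by
              rw [Finset.sum_div]
            _ = (m : ℝ) * ((m : ℝ) - 1) / (2 * n * pmin) := by
              rw [← gauss m]
              field_simp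
        linarith
    _ ≤ ∏ i : Fin m, ((1 - t i) * P (x i)) := by
        rw [Finset.prod_mul_distrib]
        show (1 - ∑ i : Fin m, t i) * iidLaw P x ≤ _
        unfold iidLaw
        exact mul_le_mul_of_nonneg_right (wei univ t ht0 ht1)
          (Finset.prod_nonneg fun i _ => le_of_lt (hPpos (x i)))
    _ ≤ hypLaw (n := n) c x := step1

/-- Hypergeometric coupling bound: sampling `m ≤ n` items without replacement
from an urn with composition `n·P` differs from i.i.d. sampling from `P` by at
most `m(m-1)/(2 n p_min)` in total variation. -/
theorem stmt_10 {k m n : ℕ} (hn : 0 < n) (hm : m ≤ n)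
    (P : Fin k → ℝ) (hPpos : ∀ x, 0 < P x) (hPsum : ∑ x, P x = 1)
    (c : Fin k → ℕ) (hc : ∀ x, (c x : ℝ) = n * P x)
    (pmin : ℝ) (hpmin : IsLeast (Set.range P) pmin) :
    ∀ S : Finset (Fin m → Fin k),
      |∑ x ∈ S, hypLaw (n := n) c x - ∑ x ∈ S, iidLaw P x| ≤
        (m : ℝ) * ((m : ℝ) - 1) / (2 * n * pmin) := by
  intro S
  obtain ⟨⟨x₀, hx₀⟩, hlb⟩ := hpmin
  have hpmin0 : 0 < pmin := hx₀ ▸ hPpos x₀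
  have hpminle : ∀ v, pmin ≤ P v := fun v => hlb ⟨v, rfl⟩
  have hnR : (0:ℝ) < n := by exact_mod_cast hn
  have hden : (0:ℝ) < 2 * n * pmin := by positivity
  have hmm0 : (0:ℝ) ≤ (m : ℝ) * ((m : ℝ) - 1) := by
    rcases Nat.eq_zero_or_pos m with h | h
    · simp [h]
    · have : (1:ℝ) ≤ (m : ℝ) := by exact_mod_cast h
      nlinarith
  have hB0 : (0:ℝ) ≤ (m : ℝ) * ((m : ℝ) - 1) / (2 * n * pmin) := div_nonneg hmm0 (le_of_lt hden)
  have hcs : ∑ v, (c v : ℝ) = n := by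
    have : ∑ v, (c v : ℝ) = ∑ v, (n : ℝ) * P v := Finset.sum_congr rfl (fun v _ => hc v)
    rw [this, ← Finset.mul_sum, hPsum, mul_one]
  have hhyp1 : ∑ x : Fin m → Fin k, hypLaw (n := n) c x = 1 := hypLaw_sum c hcs hm
  have hiid1 : ∑ x : Fin m → Fin k, iidLaw P x = 1 := by
    unfold iidLaw
    rw [← Fintype.piFinset_univ, ← Finset.prod_univ_sum]
    simp [hPsum]
  have hhyp0 : ∀ x, 0 ≤ hypLaw (n := n) c x := hypLaw_nonneg hm c
  have hiid0 : ∀ x : Fin m → Fin k, 0 ≤ iidLaw P x :=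
    fun x => Finset.prod_nonneg fun i _ => le_of_lt (hPpos (x i))
  have hsum_hyp_le : ∀ T : Finset (Fin m → Fin k), ∑ x ∈ T, hypLaw (n := n) c x ≤ 1 := by
    intro T
    rw [← hhyp1]
    exact Finset.sum_le_sum_of_subset_of_nonneg (Finset.subset_univ T) (fun x _ _ => hhyp0 x)
  have hsum_iid_le : ∀ T : Finset (Fin m → Fin k), ∑ x ∈ T, iidLaw P x ≤ 1 := by
    intro T
    rw [← hiid1]
    exact Finset.sum_le_sum_of_subset_of_nonneg (Finset.subset_univ T) (fun x _ _ => hiid0 x)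
  have hsum_hyp0 : ∀ T : Finset (Fin m → Fin k), 0 ≤ ∑ x ∈ T, hypLaw (n := n) c x :=
    fun T => Finset.sum_nonneg fun x _ => hhyp0 x
  have hsum_iid0 : ∀ T : Finset (Fin m → Fin k), 0 ≤ ∑ x ∈ T, iidLaw P x :=
    fun T => Finset.sum_nonneg fun x _ => hiid0 x
  by_cases hB : (m : ℝ) * ((m : ℝ) - 1) < 2 * n * pmin
  · set B : ℝ := (m : ℝ) * ((m : ℝ) - 1) / (2 * n * pmin) with hBdef
    have hpt : ∀ x : Fin m → Fin k, (1 - B) * iidLaw P x ≤ hypLaw (n := n) c x :=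
      hypLaw_ge hn hm P hPpos c hc pmin hpmin0 hpminle hB
    have hptS : ∀ T : Finset (Fin m → Fin k),
        (1 - B) * ∑ x ∈ T, iidLaw P x ≤ ∑ x ∈ T, hypLaw (n := n) c x := by
      intro T
      rw [Finset.mul_sum]
      exact Finset.sum_le_sum fun x _ => hpt x
    have hcomplhyp := Finset.sum_add_sum_compl S (fun x => hypLaw (n := n) c x)
    have hcompliid := Finset.sum_add_sum_compl S (fun x => iidLaw P x)
    rw [hhyp1] at hcomplhyp
    rw [hiid1] at hcompliid
    rw [abs_le]
    constructor
    · have h1 := hptS S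
      have h2 := hsum_iid_le S
      have h3 := hsum_iid0 S
      nlinarith
    · have h1 := hptS Sᶜ
      have h2 := hsum_iid_le Sᶜ
      have h3 := hsum_iid0 Sᶜ
      nlinarith
  · push_neg at hB
    have hB1 : (1:ℝ) ≤ (m : ℝ) * ((m : ℝ) - 1) / (2 * n * pmin) :=
      (one_le_div hden).mpr hB
    rw [abs_le]
    have h1 := hsum_hyp_le S
    have h2 := hsum_iid_le S
    have h3 := hsum_hyp0 S
    have h4 := hsum_iid0 S
    constructor <;> linarith
end
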